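/- Let U be the Lucas sequence with parameters P, Q where Q = ±1. Then for all positive integers m, n one has gcd(U_{m+n}, U_n) = gcd(U_m, U_n) (in absolute value). -/

import Mathlib

lemma int_gcd_add_mul (a b c : ℤ) : Int.gcd (a + b * c) b = Int.gcd a b := by
  apply Nat.dvd_antisymm
  · rw [← Int.natCast_dvd_natCast]
    apply Int.dvd_coe_gcd
    · have h1 : (Int.gcd (a + b * c) b : ℤ) ∣ a + b * c := Int.gcd_dvd_left _ _
      have h2 : (Int.gcd (a + b * c) b : ℤ) ∣ b * c := (Int.gcd_dvd_right _ _).mul_right c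
      simpa using Int.dvd_sub h1 h2
    · exact Int.gcd_dvd_right _ _
  · rw [← Int.natCast_dvd_natCast]
    apply Int.dvd_coe_gcd
    · exact Int.dvd_add (Int.gcd_dvd_left _ _) ((Int.gcd_dvd_right _ _).mul_right c)
    · exact Int.gcd_dvd_right _ _

theorem lucas_gcd_reduction
    (P Q : ℤ) (hQ : Q = 1 ∨ Q = -1)
    (U : ℕ → ℤ) (h0 : U 0 = 0) (h1 : U 1 = 1)
    (hrec : ∀ n, U (n + 2) = P * U (n + 1) + Q * U n) :
    ∀ m n : ℕ, 1 ≤ m → 1 ≤ n →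
      Int.gcd (U (m + n)) (U n) = Int.gcd (U m) (U n) := by
  have hQabs : Q.natAbs = 1 := by rcases hQ with h | h <;> simp [h]
  -- addition formula
  have hadd : ∀ m n : ℕ, U (m + n + 1) = U (m + 1) * U (n + 1) + Q * U m * U n := by
    intro m
    induction m using Nat.twoStepInduction with
    | zero => intro n; simp [h0, h1]
    | one =>
      intro n
      have : U 2 = P := by have := hrec 0; simp [h0, h1] at this; simpa using this
      have h' := hrec n
      rw [show 1 + n + 1 = n + 2 by ring, h', this, h1]
      ring
    | more m ih1 ih2 =>
      intro n
      have e1 := ih1 n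
      have e2 := ih2 n
      have h' := hrec (m + n + 1)
      rw [show m + 2 + n + 1 = (m + n + 1) + 2 by ring, h',
        show m + n + 1 + 1 = (m + 1) + n + 1 by ring, e2, e1]
      have h3 : U (m + 2 + 1) = P * U (m + 1 + 1) + Q * U (m + 1) := hrec (m + 1)
      have h4 : U (m + 1 + 1) = P * U (m + 1) + Q * U m := hrec m
      rw [h3, h4]
      ring
  -- consecutive terms are coprime
  have hcop : ∀ n : ℕ, Int.gcd (U (n + 1)) (U n) = 1 := by
    intro n
    induction n with
    | zero => simp [h0, h1]
    | succ n ih =>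
      have h' := hrec n
      rw [show n + 1 + 1 = n + 2 from rfl, h',
        show P * U (n + 1) + Q * U n = Q * U n + U (n + 1) * P by ring,
        int_gcd_add_mul]
      rw [Int.gcd, Int.natAbs_mul, hQabs, one_mul, ← Int.gcd, Int.gcd_comm]
      exact ih
  intro m n hm hn
  obtain ⟨k, rfl⟩ : ∃ k, m = k + 1 := ⟨m - 1, by omega⟩
  have e := hadd k n
  rw [show k + 1 + n = k + n + 1 by ring, e,
    show U (k + 1) * U (n + 1) + Q * U k * U n = U (k + 1) * U (n + 1) + U n * (Q * U k) by ring,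
    int_gcd_add_mul, Int.gcd, Int.natAbs_mul,
    Nat.Coprime.gcd_mul_right_cancel _ (hcop n), ← Int.gcd]
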